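/- Let A ∈ ℂ^{p×q} be a matrix whose rows are samples A[k,·] = m(θ_k) of a vector-valued function m: [−1,1] → ℂ^q at points θ_k ∈ [−1,1], and suppose each component function m_j admits a polynomial approximation of degree ℓ with uniform error at most ε on [−1,1]. Then there exists a matrix B of rank at most ℓ+1 with max-entry error ‖A − B‖_max ≤ ε, and hence ‖A − B‖_F ≤ ε·√(pq). -/

import Mathlib

open Finset in
/-- A matrix of samples of functions that admit degree-`ℓ` polynomial
approximations with uniform error `ε` admits a rank-`(ℓ+1)` approximation
with max-entry error `ε` and Frobenius error `ε·√(pq)`. -/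
theorem sample_matrix_lowrank_approx (p q ℓ : ℕ)
    (θ : Fin p → ℝ) (hθ : ∀ k, θ k ∈ Set.Icc (-1 : ℝ) 1)
    (m : Fin q → ℝ → ℂ)
    (A : Matrix (Fin p) (Fin q) ℂ)
    (hA : ∀ k j, A k j = m j (θ k))
    (ε : ℝ)
    (happrox : ∀ j, ∃ qpoly : Polynomial ℂ, qpoly.degree ≤ ℓ ∧
      ∀ x ∈ Set.Icc (-1 : ℝ) 1, ‖m j x - qpoly.eval (x : ℂ)‖ ≤ ε) :
    ∃ B : Matrix (Fin p) (Fin q) ℂ, B.rank ≤ ℓ + 1 ∧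
      (∀ k j, ‖A k j - B k j‖ ≤ ε) ∧
      Real.sqrt (∑ k, ∑ j, ‖A k j - B k j‖ ^ 2) ≤
        ε * Real.sqrt (p * q) := by
  choose qp hdeg herr using happrox
  set B : Matrix (Fin p) (Fin q) ℂ :=
    Matrix.of fun k j => (qp j).eval ((θ k : ℝ) : ℂ) with hB
  have hentry : ∀ k j, ‖A k j - B k j‖ ≤ ε := by
    intro k j
    rw [hA k j]
    exact herr j (θ k) (hθ k)
  refine ⟨B, ?_, hentry, ?_⟩
  · -- rank bound
    set V : Matrix (Fin p) (Fin (ℓ + 1)) ℂ :=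
      Matrix.of fun k i => ((θ k : ℝ) : ℂ) ^ (i : ℕ) with hV
    set C : Matrix (Fin (ℓ + 1)) (Fin q) ℂ :=
      Matrix.of fun i j => (qp j).coeff i with hC
    have hBVC : B = V * C := by
      ext k j
      have hnd : (qp j).natDegree < ℓ + 1 :=
        Nat.lt_succ_of_le (Polynomial.natDegree_le_iff_degree_le.mpr (hdeg j))
      rw [hB, hV, hC]
      simp only [Matrix.mul_apply, Matrix.of_apply]
      rw [Polynomial.eval_eq_sum_range' hnd]
      rw [Finset.sum_range fun i => (qp j).coeff i * ((θ k : ℝ) : ℂ) ^ i]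
      exact Finset.sum_congr rfl fun i _ => (mul_comm _ _)
    calc B.rank ≤ V.rank := by rw [hBVC]; exact Matrix.rank_mul_le_left V C
      _ ≤ Fintype.card (Fin (ℓ + 1)) := Matrix.rank_le_card_width V
      _ = ℓ + 1 := Fintype.card_fin _
  · -- Frobenius bound
    rcases le_or_gt 0 ε with hε | hε
    · have hsum : (∑ k, ∑ j, ‖A k j - B k j‖ ^ 2) ≤
          ε ^ 2 * ((p : ℝ) * q) := by
        calc (∑ k, ∑ j, ‖A k j - B k j‖ ^ 2)
            ≤ ∑ k : Fin p, ∑ j : Fin q, ε ^ 2 := by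
              refine Finset.sum_le_sum fun k _ => Finset.sum_le_sum fun j _ => ?_
              exact pow_le_pow_left₀ (norm_nonneg _) (hentry k j) 2
          _ = ε ^ 2 * ((p : ℝ) * q) := by
              simp [Finset.sum_const, mul_comm, mul_assoc, mul_left_comm]
      calc Real.sqrt (∑ k, ∑ j, ‖A k j - B k j‖ ^ 2)
          ≤ Real.sqrt (ε ^ 2 * ((p : ℝ) * q)) := Real.sqrt_le_sqrt hsum
        _ = ε * Real.sqrt ((p : ℝ) * q) := by
            rw [Real.sqrt_mul (sq_nonneg ε), Real.sqrt_sq hε]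
    · -- ε < 0 forces p = 0 or q = 0
      have hpq : p = 0 ∨ q = 0 := by
        by_contra h
        push_neg at h
        obtain ⟨hp, hq⟩ := h
        have k : Fin p := ⟨0, Nat.pos_of_ne_zero hp⟩
        have j : Fin q := ⟨0, Nat.pos_of_ne_zero hq⟩
        exact absurd (le_trans (norm_nonneg _) (hentry k j)) (not_le.mpr hε)
      rcases hpq with h | h <;> subst h <;> simp
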